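/- Let A be a finite nonempty set of positive integers and let φ be the multi-pattern 1-1'2'. Then in ℚ⟦x,y⟧: Σ_{n,m≥0} |C_{n;m}^A(φ)| x^n y^m = 1 + ( y·Σ_{a∈A} x^a ) / ∏_{a∈A}(1 − x^a y), where each factor (1−x^a y) is invertible in ℚ⟦x,y⟧. -/

import Mathlib

/-- A composition of `n` with `m` parts, all parts in `A`. -/
def IsCompOf (A : Finset ℕ) (n m : ℕ) (σ : List ℕ) : Prop :=
  (∀ x ∈ σ, x ∈ A) ∧ σ.sum = n ∧ σ.length = m

/-- `σ` contains the multi-pattern 1-1'2': there are indices `i < j` with `j+1`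
still a valid position, such that `σ j < σ (j+1)` (0-indexed). -/
def Contains112 (σ : List ℕ) : Prop :=
  ∃ i j : ℕ, i < j ∧ j + 1 < σ.length ∧ σ.getD j 0 < σ.getD (j + 1) 0

/-- The number of compositions of `n` with `m` parts in `A` avoiding 1-1'2'. -/
noncomputable def count112 (A : Finset ℕ) (n m : ℕ) : ℕ :=
  Set.ncard {σ : List ℕ | IsCompOf A n m σ ∧ ¬ Contains112 σ}

namespace Stmt9Aux
open Finset List MvPowerSeries

def lists (s : Finset ℕ) : ℕ → Finset (List ℕ)
  | 0 => {[]}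
  | m + 1 => (s ×ˢ lists s m).image fun p => p.1 :: p.2

lemma mem_lists {s : Finset ℕ} : ∀ {m : ℕ} {σ : List ℕ},
    σ ∈ lists s m ↔ σ.length = m ∧ ∀ x ∈ σ, x ∈ s
  | 0, σ => by
    simp only [lists, Finset.mem_singleton, List.length_eq_zero_iff]
    constructor
    · rintro rfl; simp
    · rintro ⟨rfl, -⟩; rfl
  | m + 1, σ => by
    constructor
    · intro h
      simp only [lists, Finset.mem_image, Finset.mem_product] at h
      obtain ⟨⟨a, τ⟩, ⟨ha, hτ⟩, rfl⟩ := h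
      obtain ⟨hlen, hmem⟩ := mem_lists.mp hτ
      refine ⟨by simp [hlen], ?_⟩
      intro x hx
      rcases List.mem_cons.mp hx with rfl | hx
      · exact ha
      · exact hmem x hx
    · rintro ⟨hlen, hmem⟩
      cases σ with
      | nil => simp at hlen
      | cons a τ =>
        simp only [lists, Finset.mem_image, Finset.mem_product]
        exact ⟨(a, τ), ⟨hmem a (by simp),
          mem_lists.mpr ⟨by simpa using hlen, fun x hx => hmem x (List.mem_cons_of_mem _ hx)⟩⟩, rfl⟩

/-- weakly decreasing compositions -/
noncomputable def WF (s : Finset ℕ) (n m : ℕ) : Finset (List ℕ) :=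
  (lists s m).filter fun σ => σ.sum = n ∧ σ.Pairwise (· ≥ ·)

lemma mem_WF {s : Finset ℕ} {n m : ℕ} {σ : List ℕ} :
    σ ∈ WF s n m ↔ (∀ x ∈ σ, x ∈ s) ∧ σ.sum = n ∧ σ.length = m ∧ σ.Pairwise (· ≥ ·) := by
  simp only [WF, Finset.mem_filter, mem_lists]; tauto

/-- compositions avoiding 1-1'2' -/
noncomputable def CF (s : Finset ℕ) (n m : ℕ) : Finset (List ℕ) :=
  (lists s m).filter fun σ => σ.sum = n ∧ σ.tail.Pairwise (· ≥ ·)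

lemma mem_CF {s : Finset ℕ} {n m : ℕ} {σ : List ℕ} :
    σ ∈ CF s n m ↔ (∀ x ∈ σ, x ∈ s) ∧ σ.sum = n ∧ σ.length = m ∧ σ.tail.Pairwise (· ≥ ·) := by
  simp only [CF, Finset.mem_filter, mem_lists]; tauto

lemma WF_insert_card {b : ℕ} {s : Finset ℕ} (hb : ∀ x ∈ s, x < b) (n m : ℕ) :
    (WF (insert b s) n m).card
      = (WF s n m).card
        + if b ≤ n ∧ 1 ≤ m then (WF (insert b s) (n - b) (m - 1)).card else 0 := by
  classical
  have hbs : b ∉ s := fun h => lt_irrefl b (hb b h)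
  rw [← Finset.card_filter_add_card_filter_not (s := WF (insert b s) n m)
    (p := fun σ => b ∈ σ)]
  have h1 : (WF (insert b s) n m).filter (fun σ => ¬ b ∈ σ) = WF s n m := by
    ext σ
    simp only [Finset.mem_filter, mem_WF]
    constructor
    · rintro ⟨⟨hmem, hs, hl, hp⟩, hnb⟩
      refine ⟨fun x hx => ?_, hs, hl, hp⟩
      rcases Finset.mem_insert.mp (hmem x hx) with rfl | h
      · exact absurd hx hnb
      · exact h
    · rintro ⟨hmem, hs, hl, hp⟩
      exact ⟨⟨fun x hx => Finset.mem_insert_of_mem (hmem x hx), hs, hl, hp⟩,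
        fun hbσ => hbs (hmem b hbσ)⟩
  have h2 : ((WF (insert b s) n m).filter (fun σ => b ∈ σ)).card
      = if b ≤ n ∧ 1 ≤ m then (WF (insert b s) (n - b) (m - 1)).card else 0 := by
    -- head of any such list is b
    have hhead : ∀ σ ∈ (WF (insert b s) n m).filter (fun σ => b ∈ σ),
        ∃ τ, σ = b :: τ := by
      intro σ hσ
      rw [Finset.mem_filter, mem_WF] at hσ
      obtain ⟨⟨hmem, hs, hl, hp⟩, hbσ⟩ := hσ
      cases σ with
      | nil => simp at hbσ
      | cons h t =>
        refine ⟨t, ?_⟩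
        rcases List.mem_cons.mp hbσ with rfl | hbt
        · rfl
        · have h1 : h ≥ b := (List.pairwise_cons.mp hp).1 b hbt
          have h2 : h ≤ b := by
            rcases Finset.mem_insert.mp (hmem h (by simp)) with rfl | h'
            · exact le_refl _
            · exact (hb h h').le
          rw [le_antisymm h2 h1]
    split_ifs with hcond
    · obtain ⟨hbn, hm⟩ := hcond
      apply Finset.card_bij' (fun σ _ => σ.tail) (fun τ _ => b :: τ)
      · intro σ hσ
        obtain ⟨τ, rfl⟩ := hhead σ hσ
        rw [Finset.mem_filter, mem_WF] at hσ
        obtain ⟨⟨hmem, hs, hl, hp⟩, -⟩ := hσ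
        rw [mem_WF]
        refine ⟨fun x hx => hmem x (List.mem_cons_of_mem _ hx), ?_, ?_, hp.of_cons⟩
        · simp only [List.tail_cons]; simp only [List.sum_cons] at hs; omega
        · simp only [List.tail_cons]; simp only [List.length_cons] at hl; omega
      · intro τ hτ
        rw [mem_WF] at hτ
        obtain ⟨hmem, hs, hl, hp⟩ := hτ
        rw [Finset.mem_filter, mem_WF]
        refine ⟨⟨fun x hx => ?_, ?_, ?_, ?_⟩, by simp⟩
        · rcases List.mem_cons.mp hx with rfl | hx
          · exact Finset.mem_insert_self _ _
          · exact hmem x hx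
        · simp only [List.sum_cons, hs]; omega
        · simp only [List.length_cons, hl]; omega
        · rw [List.pairwise_cons]
          refine ⟨fun x hx => ?_, hp⟩
          rcases Finset.mem_insert.mp (hmem x hx) with rfl | h'
          · exact le_refl _
          · exact (hb x h').le
      · intro σ hσ
        obtain ⟨τ, rfl⟩ := hhead σ hσ
        rfl
      · intro τ hτ
        rfl
    · rw [Finset.card_eq_zero, Finset.filter_eq_empty_iff]
      intro σ hσ
      rw [mem_WF] at hσ
      obtain ⟨hmem, hs, hl, hp⟩ := hσ
      intro hbσ
      have h1 : b ≤ σ.sum := List.single_le_sum (fun _ _ => Nat.zero_le _) _ hbσ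
      have h2 : 1 ≤ σ.length := List.length_pos_iff.mpr (List.ne_nil_of_mem hbσ)
      omega
  rw [h1, h2]
  omega

lemma WF_empty_card (n m : ℕ) : (WF ∅ n m).card = if n = 0 ∧ m = 0 then 1 else 0 := by
  by_cases h : n = 0 ∧ m = 0
  · obtain ⟨rfl, rfl⟩ := h
    rw [if_pos ⟨rfl, rfl⟩]
    have hWF : WF ∅ 0 0 = {([] : List ℕ)} := by
      ext σ
      simp only [mem_WF, Finset.mem_singleton]
      constructor
      · rintro ⟨-, -, hl, -⟩; exact List.length_eq_zero_iff.mp hl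
      · rintro rfl; simp
    rw [hWF, Finset.card_singleton]
  · rw [if_neg h, Finset.card_eq_zero, Finset.eq_empty_iff_forall_notMem]
    intro σ hσ
    rw [mem_WF] at hσ
    obtain ⟨hmem, hs, hl, -⟩ := hσ
    cases σ with
    | nil =>
      simp only [List.sum_nil] at hs
      simp only [List.length_nil] at hl
      exact h ⟨hs.symm, hl.symm⟩
    | cons x t => exact absurd (hmem x (by simp)) (Finset.notMem_empty x)

lemma avoid_iff {σ : List ℕ} : ¬ Contains112 σ ↔ σ.tail.Pairwise (· ≥ ·) := by
  have h1 : Contains112 σ ↔ ∃ i : ℕ, i + 1 < σ.tail.length ∧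
      σ.tail.getD i 0 < σ.tail.getD (i + 1) 0 := by
    cases σ with
    | nil =>
      constructor
      · rintro ⟨i, j, hij, hj, hlt⟩; simp at hj
      · rintro ⟨i, hi, -⟩; simp at hi
    | cons h t =>
      simp only [List.tail_cons]
      constructor
      · rintro ⟨i, j, hij, hj, hlt⟩
        obtain ⟨j', rfl⟩ : ∃ j', j = j' + 1 := ⟨j - 1, by omega⟩
        simp only [List.length_cons] at hj
        refine ⟨j', by omega, ?_⟩
        simpa [List.getD_cons_succ] using hlt
      · rintro ⟨i, hi, hlt⟩
        refine ⟨0, i + 1, by omega, by simp only [List.length_cons]; omega, ?_⟩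
        simpa [List.getD_cons_succ] using hlt
  rw [h1, ← List.isChain_iff_pairwise, List.isChain_iff_getElem]
  push_neg
  constructor
  · intro h i hi
    have h2 : i + 1 < σ.tail.length := by omega
    have h3 := h i h2
    rw [List.getD_eq_getElem _ _ (by omega : i < σ.tail.length),
      List.getD_eq_getElem _ _ h2] at h3
    exact h3
  · intro h i hi
    rw [List.getD_eq_getElem _ _ (by omega : i < σ.tail.length), List.getD_eq_getElem _ _ hi]
    have h3 := h i (by omega)
    exact h3

lemma count112_eq (A : Finset ℕ) (n m : ℕ) : count112 A n m = (CF A n m).card := by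
  rw [count112]
  have h : {σ : List ℕ | IsCompOf A n m σ ∧ ¬ Contains112 σ} = ↑(CF A n m) := by
    ext σ
    simp only [Set.mem_setOf_eq, Finset.coe_insert, Finset.mem_coe, mem_CF, IsCompOf, avoid_iff]
    tauto
  rw [h, Set.ncard_coe_finset]

lemma CF_card (A : Finset ℕ) (n m : ℕ) :
    (CF A n m).card = (if n = 0 ∧ m = 0 then 1 else 0)
      + ∑ a ∈ A, if a ≤ n ∧ 1 ≤ m then (WF A (n - a) (m - 1)).card else 0 := by
  classical
  rcases m with _ | m'
  · -- m = 0
    have hsum : ∀ a ∈ A, (if a ≤ n ∧ 1 ≤ 0 then (WF A (n - a) (0 - 1)).card else 0) = 0 := by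
      intro a _; simp
    rw [Finset.sum_congr rfl hsum, Finset.sum_const, smul_zero, add_zero]
    by_cases hn : n = 0
    · subst hn
      simp only [and_self, if_pos, true_and]
      have : CF A 0 0 = {([] : List ℕ)} := by
        ext σ
        simp only [mem_CF, Finset.mem_singleton]
        constructor
        · rintro ⟨-, -, hl, -⟩; exact List.length_eq_zero_iff.mp hl
        · rintro rfl; simp
      rw [this]; simp
    · rw [if_neg (by tauto)]
      rw [Finset.card_eq_zero, Finset.eq_empty_iff_forall_notMem]
      intro σ hσ
      rw [mem_CF] at hσ
      obtain ⟨-, hs, hl, -⟩ := hσ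
      rw [List.length_eq_zero_iff.mp hl] at hs
      simp at hs
      exact hn hs.symm
  · -- m = m' + 1
    rw [if_neg (by omega), zero_add]
    rw [Finset.card_eq_sum_card_fiberwise (f := fun σ => σ.headI) (t := A)
      (fun σ hσ => by
        rw [Finset.mem_coe, mem_CF] at hσ
        obtain ⟨hmem, -, hl, -⟩ := hσ
        cases σ with
        | nil => simp at hl
        | cons h t => exact hmem h (by simp))]
    refine Finset.sum_congr rfl fun a ha => ?_
    have hhead : ∀ σ ∈ (CF A n (m' + 1)).filter (fun σ => σ.headI = a),
        ∃ τ, σ = a :: τ := by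
      intro σ hσ
      rw [Finset.mem_filter, mem_CF] at hσ
      obtain ⟨⟨-, -, hl, -⟩, hh⟩ := hσ
      cases σ with
      | nil => simp at hl
      | cons h t => exact ⟨t, by rw [← hh]; rfl⟩
    by_cases hcond : a ≤ n
    · rw [if_pos ⟨hcond, by omega⟩]
      apply Finset.card_bij' (fun σ _ => σ.tail) (fun τ _ => a :: τ)
      · intro σ hσ
        obtain ⟨τ, rfl⟩ := hhead σ hσ
        rw [Finset.mem_filter, mem_CF] at hσ
        obtain ⟨⟨hmem, hs, hl, hp⟩, -⟩ := hσ
        rw [mem_WF]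
        simp only [List.tail_cons] at hp ⊢
        refine ⟨fun x hx => hmem x (List.mem_cons_of_mem _ hx), ?_, ?_, hp⟩
        · simp only [List.sum_cons] at hs; omega
        · simp only [List.length_cons] at hl; omega
      · intro τ hτ
        rw [mem_WF] at hτ
        obtain ⟨hmem, hs, hl, hp⟩ := hτ
        rw [Finset.mem_filter, mem_CF]
        refine ⟨⟨fun x hx => ?_, ?_, ?_, by simpa using hp⟩, rfl⟩
        · rcases List.mem_cons.mp hx with rfl | hx
          · exact ha
          · exact hmem x hx
        · simp only [List.sum_cons, hs]; omega
        · simp only [List.length_cons, hl]; omega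
      · intro σ hσ
        obtain ⟨τ, rfl⟩ := hhead σ hσ
        rfl
      · intro τ hτ
        rfl
    · rw [if_neg (by tauto)]
      rw [Finset.card_eq_zero, Finset.filter_eq_empty_iff]
      intro σ hσ
      rw [mem_CF] at hσ
      obtain ⟨-, hs, hl, -⟩ := hσ
      intro hh
      cases σ with
      | nil => simp at hl
      | cons h t =>
        simp only [List.headI] at hh
        subst hh
        simp only [List.sum_cons] at hs
        omega

/-- The generating series of weakly decreasing compositions. -/
noncomputable def Wser (s : Finset ℕ) : MvPowerSeries (Fin 2) ℚ :=
  fun e => ((WF s (e 0) (e 1)).card : ℚ)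

lemma coeff_Wser (s : Finset ℕ) (e : Fin 2 →₀ ℕ) :
    MvPowerSeries.coeff e (Wser s) = ((WF s (e 0) (e 1)).card : ℚ) := rfl

-- Finsupp helpers
lemma fin2_decomp (e : Fin 2 →₀ ℕ) :
    e = Finsupp.single 0 (e 0) + Finsupp.single 1 (e 1) := by
  ext i
  fin_cases i <;> simp [Finsupp.single_apply]

lemma fin2_eq_zero_iff (e : Fin 2 →₀ ℕ) : e = 0 ↔ e 0 = 0 ∧ e 1 = 0 := by
  constructor
  · rintro rfl; simp
  · intro ⟨h0, h1⟩
    ext i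
    fin_cases i <;> simp [h0, h1]

lemma fin2_le_iff (a k : ℕ) (e : Fin 2 →₀ ℕ) :
    (Finsupp.single 0 a + Finsupp.single 1 k : Fin 2 →₀ ℕ) ≤ e ↔ a ≤ e 0 ∧ k ≤ e 1 := by
  rw [Finsupp.le_def]
  constructor
  · intro h
    refine ⟨?_, ?_⟩
    · simpa [Finsupp.single_apply] using h 0
    · simpa [Finsupp.single_apply] using h 1
  · rintro ⟨h0, h1⟩ i
    fin_cases i <;> simp [Finsupp.single_apply, h0, h1]

lemma fin2_sub_apply (a k : ℕ) (e : Fin 2 →₀ ℕ) :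
    (e - (Finsupp.single 0 a + Finsupp.single 1 k) : Fin 2 →₀ ℕ) 0 = e 0 - a
    ∧ (e - (Finsupp.single 0 a + Finsupp.single 1 k) : Fin 2 →₀ ℕ) 1 = e 1 - k := by
  constructor <;> simp [Finsupp.tsub_apply, Finsupp.single_apply]

lemma X_mul_X_pow (a : ℕ) :
    (X 1 : MvPowerSeries (Fin 2) ℚ) * X 0 ^ a
      = monomial (Finsupp.single 0 a + Finsupp.single 1 1) 1 := by
  rw [show (X 1 : MvPowerSeries (Fin 2) ℚ) = X 1 ^ 1 from (pow_one _).symm,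
    X_pow_eq, X_pow_eq, monomial_mul_monomial, one_mul, add_comm]

lemma X_pow_mul_X (a : ℕ) :
    (X 0 : MvPowerSeries (Fin 2) ℚ) ^ a * X 1
      = monomial (Finsupp.single 0 a + Finsupp.single 1 1) 1 := by
  rw [mul_comm, X_mul_X_pow]

lemma Wser_mul (s : Finset ℕ) {b : ℕ} (hb : ∀ x ∈ s, x < b) :
    Wser (insert b s) * (1 - (X 0 : MvPowerSeries (Fin 2) ℚ) ^ b * X 1) = Wser s := by
  classical
  ext e
  rw [mul_sub, mul_one, map_sub, X_pow_mul_X, coeff_mul_monomial, coeff_Wser, coeff_Wser]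
  have key := WF_insert_card hb (e 0) (e 1)
  by_cases hle : (Finsupp.single 0 b + Finsupp.single 1 1 : Fin 2 →₀ ℕ) ≤ e
  · rw [if_pos hle]
    obtain ⟨hs0, hs1⟩ := fin2_sub_apply b 1 e
    rw [coeff_Wser, hs0, hs1, mul_one]
    have hcond : b ≤ e 0 ∧ 1 ≤ e 1 := (fin2_le_iff b 1 e).mp hle
    rw [key, if_pos hcond]
    push_cast
    ring
  · rw [if_neg hle, sub_zero]
    have hcond : ¬ (b ≤ e 0 ∧ 1 ≤ e 1) := fun h => hle ((fin2_le_iff b 1 e).mpr h)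
    rw [key, if_neg hcond, add_zero, coeff_Wser]

lemma Wser_mul_prod (s : Finset ℕ) :
    Wser s * ∏ a ∈ s, (1 - (X 0 : MvPowerSeries (Fin 2) ℚ) ^ a * X 1) = 1 := by
  classical
  induction s using Finset.induction_on_max with
  | empty =>
    rw [Finset.prod_empty, mul_one]
    ext e
    rw [coeff_Wser, WF_empty_card, coeff_one]
    rw [if_congr (fin2_eq_zero_iff e).symm rfl rfl]
    push_cast [Nat.cast_ite]
    rfl
  | insert b s hb ih =>
    rw [Finset.prod_insert (fun h => lt_irrefl b (hb b h)), ← mul_assoc, Wser_mul s hb, ih]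

lemma constCoeff_prod (A : Finset ℕ) :
    constantCoeff (∏ a ∈ A, (1 - (X 0 : MvPowerSeries (Fin 2) ℚ) ^ a * X 1)) ≠ 0 := by
  rw [map_prod]
  have h : ∀ a ∈ A, constantCoeff (1 - (X 0 : MvPowerSeries (Fin 2) ℚ) ^ a * X 1)
      = 1 := by
    intro a _
    rw [map_sub, map_one, map_mul, map_pow, constantCoeff_X, constantCoeff_X]
    simp
  rw [Finset.prod_congr rfl h, Finset.prod_const_one]
  exact one_ne_zero


end Stmt9Aux

open Stmt9Aux in
open MvPowerSeries in
theorem stmt9 (A : Finset ℕ) (hA : A.Nonempty) (hpos : ∀ a ∈ A, 0 < a)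
    (F : MvPowerSeries (Fin 2) ℚ)
    (hF : ∀ n m : ℕ,
      (MvPowerSeries.coeff (Finsupp.single 0 n + Finsupp.single 1 m)) F
        = (count112 A n m : ℚ)) :
    (∀ a ∈ A, IsUnit (1 - (X 0 : MvPowerSeries (Fin 2) ℚ) ^ a * X 1)) ∧
    F = 1 + (X 1 : MvPowerSeries (Fin 2) ℚ) * (∑ a ∈ A, (X 0) ^ a) *
          (∏ a ∈ A, (1 - (X 0 : MvPowerSeries (Fin 2) ℚ) ^ a * X 1))⁻¹ := by
  classical
  constructor
  · intro a ha
    rw [MvPowerSeries.isUnit_iff_constantCoeff]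
    have h1 : constantCoeff (1 - (X 0 : MvPowerSeries (Fin 2) ℚ) ^ a * X 1) = 1 := by
      rw [map_sub, map_one, map_mul, map_pow, constantCoeff_X, constantCoeff_X]
      simp
    rw [h1]
    exact isUnit_one
  · have hinv : (∏ a ∈ A, (1 - (X 0 : MvPowerSeries (Fin 2) ℚ) ^ a * X 1))⁻¹ = Wser A :=
      (MvPowerSeries.inv_eq_iff_mul_eq_one (constCoeff_prod A)).mpr (Wser_mul_prod A)
    rw [hinv]
    have hexp : (X 1 : MvPowerSeries (Fin 2) ℚ) * (∑ a ∈ A, (X 0) ^ a) * Wser A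
        = ∑ a ∈ A, monomial (Finsupp.single 0 a + Finsupp.single 1 1) 1 * Wser A := by
      rw [Finset.mul_sum, Finset.sum_mul]
      refine Finset.sum_congr rfl fun a _ => ?_
      rw [X_mul_X_pow]
    rw [hexp]
    ext e
    have hFe : (MvPowerSeries.coeff e) F = (count112 A (e 0) (e 1) : ℚ) := by
      have h := hF (e 0) (e 1)
      rwa [← fin2_decomp e] at h
    rw [hFe, count112_eq, CF_card, map_add, map_sum, coeff_one]
    push_cast [Nat.cast_ite, Nat.cast_sum]
    congr 1
    · rw [if_congr (fin2_eq_zero_iff e).symm rfl rfl]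
    · refine Finset.sum_congr rfl fun a ha => ?_
      rw [coeff_monomial_mul, if_congr (fin2_le_iff a 1 e) rfl rfl]
      by_cases hc : a ≤ e 0 ∧ 1 ≤ e 1
      · rw [if_pos hc, if_pos hc, one_mul, coeff_Wser,
          (fin2_sub_apply a 1 e).1, (fin2_sub_apply a 1 e).2]
      · rw [if_neg hc, if_neg hc]
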